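/- Let p be an odd prime and let α ∈ ℤ_p satisfy ‖α‖_p ≥ 1/p (i.e. α ≠ 0 with p-adic valuation 0 or 1) and suppose −α is not a square in ℚ_p. Then for all x, y ∈ ℚ_p, ‖x² + α·y²‖_p = max(‖x‖_p², ‖α‖_p·‖y‖_p²). -/

import Mathlib

open Polynomial

private lemma key_unit {p : ℕ} [Fact p.Prime] (hp : Odd p) {α : ℤ_[p]}
    (hα1 : ‖α‖ = 1) (hsq : ¬∃ x : ℚ_[p], x ^ 2 = -(α : ℚ_[p]))
    {t : ℤ_[p]} (ht : ‖t‖ = 1) : ‖t ^ 2 + α‖ = 1 := by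
  by_contra h
  have hlt : ‖t ^ 2 + α‖ < 1 := lt_of_le_of_ne (PadicInt.norm_le_one _) h
  have h2 : ‖(2 : ℤ_[p])‖ = 1 := by
    have h2' : ¬ ((p : ℤ) ∣ (2 : ℤ)) := by
      intro hdvd
      rw [show ((2:ℤ)) = ((2:ℕ):ℤ) by norm_num, Int.natCast_dvd_natCast] at hdvd
      have := (Nat.prime_dvd_prime_iff_eq (Fact.out) Nat.prime_two).mp hdvd
      rw [this] at hp
      exact absurd hp (by decide)
    have hge := (PadicInt.norm_int_lt_one_iff_dvd (2 : ℤ)).not.mpr h2'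
    push_neg at hge
    have hle : ‖((2:ℤ) : ℤ_[p])‖ ≤ 1 := PadicInt.norm_le_one _
    have : ‖((2:ℤ) : ℤ_[p])‖ = 1 := le_antisymm hle hge
    simpa using this
  set F : Polynomial ℤ_[p] := X ^ 2 + C α with hF
  have heval : ∀ z : ℤ_[p], F.eval z = z ^ 2 + α := by intro z; simp [hF]
  have hder : F.derivative = C 2 * X := by simp [hF, derivative_X_pow]; exact one_add_one_eq_two.trans (map_ofNat C 2).symm
  have hder' : F.derivative.eval t = 2 * t := by simp [hder]
  have hnorm : ‖F.eval t‖ < ‖F.derivative.eval t‖ ^ 2 := by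
    rw [heval, hder', norm_mul, h2, ht]
    simpa using hlt
  obtain ⟨z, hz, -⟩ := hensels_lemma hnorm
  rw [coe_aeval_eq_eval, heval] at hz
  apply hsq
  refine ⟨(z : ℚ_[p]), ?_⟩
  have hz' : ((z ^ 2 + α : ℤ_[p]) : ℚ_[p]) = 0 := by rw [hz]; simp
  push_cast at hz'
  linear_combination hz'

theorem padic_norm_binary_anisotropic (p : ℕ) [Fact p.Prime] (hp : Odd p)
    (α : ℤ_[p]) (hα : (1 : ℝ) / p ≤ ‖α‖)
    (hsq : ¬∃ x : ℚ_[p], x ^ 2 = -(α : ℚ_[p])) (x y : ℚ_[p]) :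
    ‖x ^ 2 + (α : ℚ_[p]) * y ^ 2‖ = max (‖x‖ ^ 2) (‖(α : ℚ_[p])‖ * ‖y‖ ^ 2) := by
  have hx2 : ‖x ^ 2‖ = ‖x‖ ^ 2 := by rw [norm_pow]
  have hay2 : ‖(α : ℚ_[p]) * y ^ 2‖ = ‖(α : ℚ_[p])‖ * ‖y‖ ^ 2 := by
    rw [norm_mul, norm_pow]
  rcases eq_or_ne (‖x‖ ^ 2) (‖(α : ℚ_[p])‖ * ‖y‖ ^ 2) with heq | hne
  · -- hard case: norms equal
    have hp1 : (1 : ℝ) < p := by exact_mod_cast (Fact.out : p.Prime).one_lt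
    have hp0 : (0 : ℝ) < p := lt_trans one_pos hp1
    have hα0 : α ≠ 0 := by
      intro h; rw [h, norm_zero] at hα
      have : (0:ℝ) < 1/p := by positivity
      linarith
    have hαQ0 : (α : ℚ_[p]) ≠ 0 := PadicInt.coe_ne_zero.mpr hα0
    have hαn0 : ‖(α : ℚ_[p])‖ ≠ 0 := norm_ne_zero_iff.mpr hαQ0
    rcases eq_or_ne y 0 with rfl | hy
    · have hx0 : x = 0 := by
        have h1 : ‖x‖ ^ 2 = 0 := by simpa using heq
        have : ‖x‖ = 0 := by nlinarith [norm_nonneg x]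
        simpa using this
      subst hx0; simp
    · have hy0 : ‖y‖ ≠ 0 := norm_ne_zero_iff.mpr hy
      have hx0 : x ≠ 0 := by
        intro h
        apply mul_ne_zero hαn0 (pow_ne_zero 2 hy0)
        rw [← heq, h]; simp
      have hvx := Padic.norm_eq_zpow_neg_valuation hx0
      have hvy := Padic.norm_eq_zpow_neg_valuation hy
      have hvα := Padic.norm_eq_zpow_neg_valuation hαQ0
      have hpne : (p:ℝ) ≠ 0 := ne_of_gt hp0
      have heq2 : (-x.valuation) * 2 = (-(α:ℚ_[p]).valuation) + (-y.valuation) * 2 := by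
        have h := heq
        rw [hvx, hvα, hvy, ← zpow_natCast ((p:ℝ) ^ (-x.valuation)) 2,
          ← zpow_natCast ((p:ℝ) ^ (-y.valuation)) 2, ← zpow_mul, ← zpow_mul,
          ← zpow_add₀ hpne] at h
        exact_mod_cast (zpow_right_inj₀ hp0 (ne_of_gt hp1)).mp h
      have hv0 : 0 ≤ (α:ℚ_[p]).valuation := PadicInt.valuation_coe_nonneg (x := α)
      have hv1 : (α:ℚ_[p]).valuation ≤ 1 := by
        have hα' : (p:ℝ) ^ (-1 : ℤ) ≤ (p:ℝ) ^ (-(α:ℚ_[p]).valuation) := by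
          rw [← hvα]
          calc (p:ℝ) ^ (-1 : ℤ) = 1/p := by
                rw [zpow_neg_one, one_div]
            _ ≤ ‖α‖ := hα
            _ = ‖(α:ℚ_[p])‖ := PadicInt.norm_def
        have := (zpow_le_zpow_iff_right₀ hp1).mp hα'
        linarith
      have hvα0 : (α:ℚ_[p]).valuation = 0 := by omega
      have hvxy : x.valuation = y.valuation := by omega
      have hα1 : ‖(α:ℚ_[p])‖ = 1 := by rw [hvα, hvα0]; simp
      have hxy : ‖x‖ = ‖y‖ := by rw [hvx, hvy, hvxy]
      have htn : ‖x / y‖ = 1 := by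
        rw [norm_div, hxy, div_self hy0]
      set t : ℤ_[p] := ⟨x / y, le_of_eq htn⟩ with htdef
      have htn' : ‖t‖ = 1 := htn
      have hα1' : ‖α‖ = 1 := by rw [PadicInt.norm_def]; exact hα1
      have hkey := key_unit hp hα1' hsq htn'
      have hcoe : ((t ^ 2 + α : ℤ_[p]) : ℚ_[p]) = (x/y) ^ 2 + (α:ℚ_[p]) := by
        push_cast [htdef]; rfl
      have hsplit : x ^ 2 + (α:ℚ_[p]) * y ^ 2 = y ^ 2 * ((x/y) ^ 2 + (α:ℚ_[p])) := by
        field_simp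
        try ring
      rw [hsplit, norm_mul, norm_pow, ← hcoe, PadicInt.padic_norm_e_of_padicInt, hkey,
        mul_one, hxy, hα1, one_mul, max_self]
  · rw [Padic.add_eq_max_of_ne (by rw [hx2, hay2]; exact hne), hx2, hay2]
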